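/- In the hyperbolic plane ℍ²_ℝ, let C be a geodesic line and let ξ, η be two distinct points at infinity lying in the same component of ∂_∞ℍ² \ ∂_∞C. Then the distance-like map satisfies d_C(ξ,η) = sinh( d(π_C(ξ), π_C(η)) / 2 ), where π_C denotes the closest-point projection onto C. -/

import Mathlib

open Filter UpperHalfPlane

/-- The point `i·ξ` of the hyperbolic plane (upper half-plane model); for a boundary point
`ξ > 0`, this is the closest point `π_C(ξ)` on the geodesic line `C` given by the imaginary
axis. -/
noncomputable def axisPoint (ξ : ℝ) (hξ : 0 < ξ) : UpperHalfPlane :=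
  ⟨⟨0, ξ⟩, hξ⟩

/-- The unit-speed geodesic ray of the hyperbolic plane starting at time `0` from `i·ξ`
(the projection of the boundary point `ξ > 0` on the imaginary axis `C`) and converging to
the boundary point `ξ` on the real line: it travels along the Euclidean semicircle of
radius `ξ` centered at `0`, orthogonal to `C`. -/
noncomputable def axisRay (ξ : ℝ) (hξ : 0 < ξ) (t : ℝ) : UpperHalfPlane :=
  ⟨⟨ξ * Real.tanh t, ξ / Real.cosh t⟩, by positivity⟩

theorem dC_eq_sinh_half_dist_proj
    (ξ η : ℝ) (hξ : 0 < ξ) (hη : 0 < η) (hne : ξ ≠ η) :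
    Tendsto (fun t : ℝ => Real.exp (dist (axisRay ξ hξ t) (axisRay η hη t) / 2 - t))
      atTop
      (nhds (Real.sinh (dist (axisPoint ξ hξ) (axisPoint η hη) / 2))) := by
  set a : ℝ := |ξ - η| / (2 * Real.sqrt (ξ * η)) with ha
  have hsq : (0:ℝ) < Real.sqrt (ξ * η) := Real.sqrt_pos.2 (by positivity)
  -- distance between the axis points
  have him : (axisPoint ξ hξ).im = ξ := rfl
  have hdistC : dist ((axisPoint ξ hξ : ℂ)) ((axisPoint η hη : ℂ)) = |ξ - η| := by
    rw [Complex.dist_eq_re_im]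
    show Real.sqrt ((0 - 0) ^ 2 + (ξ - η) ^ 2) = |ξ - η|
    simp [Real.sqrt_sq_eq_abs]
  have htarget : Real.sinh (dist (axisPoint ξ hξ) (axisPoint η hη) / 2) = a := by
    rw [UpperHalfPlane.dist_eq, hdistC]
    have : (axisPoint ξ hξ).im * (axisPoint η hη).im = ξ * η := rfl
    rw [this]
    rw [mul_div_cancel_left₀ _ (two_ne_zero), Real.sinh_arsinh]
  rw [htarget]
  -- distance between the ray points
  have hray : ∀ t : ℝ, dist (axisRay ξ hξ t) (axisRay η hη t)
      = 2 * Real.arsinh (a * Real.cosh t) := by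
    intro t
    have hc : (0:ℝ) < Real.cosh t := Real.cosh_pos t
    have hdc : dist ((axisRay ξ hξ t : ℂ)) ((axisRay η hη t : ℂ)) = |ξ - η| := by
      rw [Complex.dist_eq_re_im]
      show Real.sqrt ((ξ * Real.tanh t - η * Real.tanh t) ^ 2
        + (ξ / Real.cosh t - η / Real.cosh t) ^ 2) = |ξ - η|
      have h1 : (ξ * Real.tanh t - η * Real.tanh t) ^ 2
          + (ξ / Real.cosh t - η / Real.cosh t) ^ 2
          = (ξ - η) ^ 2 * (Real.sinh t ^ 2 + 1) / Real.cosh t ^ 2 := by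
        rw [Real.tanh_eq_sinh_div_cosh]; field_simp
      rw [h1, ← Real.cosh_sq, mul_div_assoc,
        div_self (by positivity), mul_one, Real.sqrt_sq_eq_abs]
    have himm : (axisRay ξ hξ t).im * (axisRay η hη t).im
        = ξ * η / Real.cosh t ^ 2 := by
      show ξ / Real.cosh t * (η / Real.cosh t) = ξ * η / Real.cosh t ^ 2
      field_simp
    rw [UpperHalfPlane.dist_eq, hdc, himm]
    congr 1
    congr 1
    have hs : Real.sqrt (ξ * η / Real.cosh t ^ 2) = Real.sqrt (ξ * η) / Real.cosh t := by
      rw [Real.sqrt_div (by positivity), Real.sqrt_sq hc.le]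
    rw [hs, ha]
    field_simp
  have ha0 : 0 ≤ a := by positivity
  have key : ∀ t : ℝ, Real.exp (dist (axisRay ξ hξ t) (axisRay η hη t) / 2 - t)
      = a * (Real.cosh t * Real.exp (-t))
        + Real.sqrt (Real.exp (-t) ^ 2 + a ^ 2 * (Real.cosh t * Real.exp (-t)) ^ 2) := by
    intro t
    have hc : (0:ℝ) < Real.cosh t := Real.cosh_pos t
    have he : (0:ℝ) < Real.exp (-t) := Real.exp_pos _
    rw [hray t, mul_div_cancel_left₀ _ (two_ne_zero), sub_eq_add_neg, Real.exp_add,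
      Real.exp_arsinh]
    have hs2 : Real.sqrt (Real.exp (-t) ^ 2 + a ^ 2 * (Real.cosh t * Real.exp (-t)) ^ 2)
        = Real.sqrt (1 + (a * Real.cosh t) ^ 2) * Real.exp (-t) := by
      rw [show Real.exp (-t) ^ 2 + a ^ 2 * (Real.cosh t * Real.exp (-t)) ^ 2
          = (1 + (a * Real.cosh t) ^ 2) * Real.exp (-t) ^ 2 by ring,
        Real.sqrt_mul (by positivity), Real.sqrt_sq he.le]
    rw [hs2]
    ring
  simp only [key]
  -- limits
  have hexp : Tendsto (fun t : ℝ => Real.exp (-t)) atTop (nhds 0) :=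
    Real.tendsto_exp_neg_atTop_nhds_zero
  have hu : Tendsto (fun t : ℝ => Real.cosh t * Real.exp (-t)) atTop (nhds (1/2)) := by
    have h2 : Tendsto (fun t : ℝ => Real.exp (-(2*t))) atTop (nhds 0) :=
      hexp.comp (tendsto_id.const_mul_atTop two_pos)
    have heq : ∀ t : ℝ, Real.cosh t * Real.exp (-t) = (1 + Real.exp (-(2*t))) / 2 := by
      intro t
      have h1 : Real.exp t * Real.exp (-t) = 1 := by rw [← Real.exp_add]; simp
      have h2 : Real.exp (-(2*t)) = Real.exp (-t) * Real.exp (-t) := by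
        rw [← Real.exp_add]; ring_nf
      rw [Real.cosh_eq, h2]
      field_simp
      linear_combination h1
    simp only [heq]
    have : Tendsto (fun t : ℝ => (1 + Real.exp (-(2*t))) / 2) atTop (nhds ((1 + 0)/2)) :=
      (h2.const_add 1).div_const 2
    simpa using this
  have hlim : Tendsto (fun t : ℝ => a * (Real.cosh t * Real.exp (-t))
      + Real.sqrt (Real.exp (-t) ^ 2 + a ^ 2 * (Real.cosh t * Real.exp (-t)) ^ 2)) atTop
      (nhds (a * (1/2) + Real.sqrt (0 ^ 2 + a ^ 2 * (1/2) ^ 2))) := by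
    exact (hu.const_mul a).add
      ((Real.continuous_sqrt.tendsto _).comp
        ((hexp.pow 2).add ((hu.pow 2).const_mul (a ^ 2))))
  have hval : a * (1/2) + Real.sqrt (0 ^ 2 + a ^ 2 * (1/2) ^ 2) = a := by
    have : (0:ℝ) ^ 2 + a ^ 2 * (1/2) ^ 2 = (a/2) ^ 2 := by ring
    rw [this, Real.sqrt_sq (by positivity)]
    ring
  rw [hval] at hlim
  exact hlim
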